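/- (Quadratic SQP step.) Let f:ℝⁿ→ℝ, h:ℝⁿ→ℝ^{mE}, g:ℝⁿ→ℝ^{mI} be twice continuously differentiable with locally Lipschitz second derivatives near x*. Let E ⊆ {1,…,mE} and A ⊆ {1,…,mI}, suppose h_i(x*)=0 for i∈E and g_i(x*)=0 for i∈A, the vectors {∇h_i(x*) : i∈E} ∪ {∇g_i(x*) : i∈A} are linearly independent, and there are multipliers μ* ∈ ℝ^E, λ* ∈ ℝ^A with ∇f(x*) − Σ_{i∈E} μ_i* ∇h_i(x*) − Σ_{i∈A} λ_i* ∇g_i(x*) = 0 and dᵀ∇²ₓₓL(x*,μ*,λ*)d ≥ γ‖d‖² for some γ>0 and all d with ∇h_i(x*)ᵀd = 0 (i∈E) and ∇g_i(x*)ᵀd = 0 (i∈A), where L(x,μ,λ) = f(x) − Σ_{i∈E} μ_i h_i(x) − Σ_{i∈A} λ_i g_i(x). Let sequences x_ℓ → x*, μ_ℓ, λ_ℓ with ‖μ_ℓ − μ*‖ + ‖λ_ℓ − λ*‖ = O(‖x_ℓ − x*‖), and directions d_ℓ satisfy, for every ℓ: ∇f(x_ℓ) + ∇²ₓₓL(x_ℓ,μ_ℓ,λ_ℓ)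 d_ℓ − Σ_{i∈E} μ_{ℓ+1,i} ∇h_i(x_ℓ) − Σ_{i∈A} λ_{ℓ+1,i} ∇g_i(x_ℓ) = 0, h_i(x_ℓ) + ∇h_i(x_ℓ)ᵀd_ℓ = 0 for i∈E, and g_i(x_ℓ) + ∇g_i(x_ℓ)ᵀd_ℓ = 0 for i∈A, with μ_{ℓ+1} → μ* and λ_{ℓ+1} → λ*. Then ‖x_ℓ + d_ℓ − x*‖ = O(‖x_ℓ − x*‖²). -/

import Mathlib

open RealInnerProductSpace Filter

section SQPAux
open InnerProductSpace ContinuousLinearMap Metric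

variable {V : Type*} [NormedAddCommGroup V] [InnerProductSpace ℝ V] [CompleteSpace V]
variable {ι : Type*} [Fintype ι]

noncomputable def Hop (F : V → ℝ) (x : V) : V →L[ℝ] V := fderiv ℝ (gradient F) x

theorem pairing (F : V → ℝ) (x a b : V) :
    ⟪Hop F x a, b⟫ = iteratedFDeriv ℝ 2 F x ![a, b] := by
  show ⟪fderiv ℝ (gradient F) x a, b⟫ = _
  rw [iteratedFDeriv_two_apply]
  have h1 : gradient F = (⇑(toDual ℝ V).symm) ∘ (fderiv ℝ F) := rfl
  rw [h1, LinearIsometryEquiv.comp_fderiv (toDual ℝ V).symm]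
  exact toDual_symm_apply

theorem H_sub_opnorm (F : V → ℝ) (x y : V) :
    ‖Hop F x - Hop F y‖ ≤ ‖iteratedFDeriv ℝ 2 F x - iteratedFDeriv ℝ 2 F y‖ := by
  refine ContinuousLinearMap.opNorm_le_bound _ (norm_nonneg _) (fun a => ?_)
  set u := (Hop F x - Hop F y) a with hu
  have key : ∀ b : V, ⟪u, b⟫ = (iteratedFDeriv ℝ 2 F x - iteratedFDeriv ℝ 2 F y) ![a, b] := by
    intro b
    rw [hu, ContinuousLinearMap.sub_apply, inner_sub_left, pairing, pairing,
      ContinuousMultilinearMap.sub_apply]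
  have h2 : ‖u‖ ^ 2 ≤ ‖iteratedFDeriv ℝ 2 F x - iteratedFDeriv ℝ 2 F y‖ * ‖a‖ * ‖u‖ := by
    have hle : |(iteratedFDeriv ℝ 2 F x - iteratedFDeriv ℝ 2 F y) ![a, u]|
        ≤ ‖iteratedFDeriv ℝ 2 F x - iteratedFDeriv ℝ 2 F y‖ * (‖a‖ * ‖u‖) := by
      calc |(iteratedFDeriv ℝ 2 F x - iteratedFDeriv ℝ 2 F y) ![a, u]|
          ≤ ‖iteratedFDeriv ℝ 2 F x - iteratedFDeriv ℝ 2 F y‖ * ∏ i, ‖(![a, u]) i‖ :=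
            (iteratedFDeriv ℝ 2 F x - iteratedFDeriv ℝ 2 F y).le_opNorm _
        _ = ‖iteratedFDeriv ℝ 2 F x - iteratedFDeriv ℝ 2 F y‖ * (‖a‖ * ‖u‖) := by
            congr 1
            simp [Fin.prod_univ_two]
    calc ‖u‖ ^ 2 = ⟪u, u⟫ := (real_inner_self_eq_norm_sq u).symm
      _ = (iteratedFDeriv ℝ 2 F x - iteratedFDeriv ℝ 2 F y) ![a, u] := key u
      _ ≤ |(iteratedFDeriv ℝ 2 F x - iteratedFDeriv ℝ 2 F y) ![a, u]| := le_abs_self _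
      _ ≤ ‖iteratedFDeriv ℝ 2 F x - iteratedFDeriv ℝ 2 F y‖ * (‖a‖ * ‖u‖) := hle
      _ = ‖iteratedFDeriv ℝ 2 F x - iteratedFDeriv ℝ 2 F y‖ * ‖a‖ * ‖u‖ := by ring
  rcases eq_or_lt_of_le (norm_nonneg u) with h0 | h0
  · rw [← h0]; positivity
  · exact le_of_mul_le_mul_right (by rwa [sq] at h2) h0

theorem contDiff_gradient' (F : V → ℝ) (hF : ContDiff ℝ 2 F) : ContDiff ℝ 1 (gradient F) := by
  have h1 : ContDiff ℝ 1 (fderiv ℝ F) := hF.fderiv_right (by norm_num)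
  exact ((toDual ℝ V).symm.contDiff).comp h1

theorem gradient_lag (f : V → ℝ) (c : ι → V → ℝ)
    (hf : ContDiff ℝ 2 f) (hc : ∀ j, ContDiff ℝ 2 (c j)) (w : ι → ℝ) :
    gradient (fun y => f y - ∑ j, w j * c j y)
      = fun x => gradient f x - ∑ j, w j • gradient (c j) x := by
  funext x
  have hdc : ∀ j, DifferentiableAt ℝ (fun y => w j * c j y) x := fun j =>
    (((hc j).differentiable (by norm_num)).const_smul (w j)).differentiableAt
  have h1 : fderiv ℝ (fun y => f y - ∑ j, w j * c j y) x
      = fderiv ℝ f x - ∑ j, w j • fderiv ℝ (c j) x := by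
    rw [fderiv_fun_sub ((hf.differentiable (by norm_num)).differentiableAt)
      (DifferentiableAt.fun_sum (fun j _ => hdc j)),
      fderiv_fun_sum (fun j _ => hdc j)]
    congr 1
    refine Finset.sum_congr rfl (fun j _ => ?_)
    exact fderiv_const_smul (((hc j).differentiable (by norm_num)).differentiableAt) (w j)
  show (toDual ℝ V).symm (fderiv ℝ (fun y => f y - ∑ j, w j * c j y) x) = _
  rw [h1, map_sub, map_sum]
  congr 1
  refine Finset.sum_congr rfl (fun j _ => ?_)
  rw [map_smul]
  rfl

theorem Hop_lag (f : V → ℝ) (c : ι → V → ℝ)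
    (hf : ContDiff ℝ 2 f) (hc : ∀ j, ContDiff ℝ 2 (c j)) (w : ι → ℝ) (x : V) :
    Hop (fun y => f y - ∑ j, w j * c j y) x = Hop f x - ∑ j, w j • Hop (c j) x := by
  unfold Hop
  rw [gradient_lag f c hf hc w]
  have hdg : ∀ j, DifferentiableAt ℝ (fun y => w j • gradient (c j) y) x := fun j =>
    (((contDiff_gradient' (c j) (hc j)).differentiable one_ne_zero).const_smul (w j)).differentiableAt
  rw [fderiv_fun_sub (((contDiff_gradient' f hf).differentiable one_ne_zero).differentiableAt)
    (DifferentiableAt.fun_sum (fun j _ => hdg j)), fderiv_fun_sum (fun j _ => hdg j)]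
  congr 1
  refine Finset.sum_congr rfl (fun j _ => ?_)
  exact fderiv_const_smul (((contDiff_gradient' (c j) (hc j)).differentiable one_ne_zero).differentiableAt) (w j)

theorem lag_pair (f : V → ℝ) (c : ι → V → ℝ)
    (hf : ContDiff ℝ 2 f) (hc : ∀ j, ContDiff ℝ 2 (c j)) (w : ι → ℝ) (x a b : V) :
    ⟪Hop f x a - ∑ j, w j • Hop (c j) x a, b⟫
      = iteratedFDeriv ℝ 2 (fun y => f y - ∑ j, w j * c j y) x ![a, b] := by
  rw [← pairing]
  rw [Hop_lag f c hf hc w x]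
  congr 1
  simp

theorem gradient_lip (F : V → ℝ) (hF : ContDiff ℝ 2 F) (x0 : V) (r C : ℝ)
    (hC : ∀ w ∈ ball x0 r, ‖Hop F w‖ ≤ C) (x y : V) (hx : x ∈ ball x0 r) (hy : y ∈ ball x0 r) :
    ‖gradient F x - gradient F y‖ ≤ C * ‖x - y‖ := by
  exact Convex.norm_image_sub_le_of_norm_hasFDerivWithin_le
    (fun w hw => (((contDiff_gradient' F hF).differentiable one_ne_zero w).hasFDerivAt).hasFDerivWithinAt)
    hC (convex_ball x0 r) hy hx

noncomputable def Phi (f : V → ℝ) (c : ι → V → ℝ) (z : V × (ι → ℝ)) : V × (ι → ℝ) :=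
  (gradient f z.1 - ∑ j, z.2 j • gradient (c j) z.1, fun j => c j z.1)

noncomputable def DPhi (f : V → ℝ) (c : ι → V → ℝ) (z : V × (ι → ℝ)) :
    (V × (ι → ℝ)) →L[ℝ] (V × (ι → ℝ)) :=
  ((Hop f z.1).comp (fst ℝ V (ι → ℝ))
    - ∑ j, (z.2 j • (Hop (c j) z.1).comp (fst ℝ V (ι → ℝ))
        + ((ContinuousLinearMap.proj j).comp (snd ℝ V (ι → ℝ))).smulRight
            (gradient (c j) z.1))).prod
  (ContinuousLinearMap.pi (fun j => (innerSL ℝ (gradient (c j) z.1)).comp (fst ℝ V (ι → ℝ))))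

theorem DPhi_apply_fst (f : V → ℝ) (c : ι → V → ℝ) (z ζ : V × (ι → ℝ)) :
    (DPhi f c z ζ).1 = Hop f z.1 ζ.1
      - ∑ j, (z.2 j • Hop (c j) z.1 ζ.1 + ζ.2 j • gradient (c j) z.1) := by
  simp [DPhi]

theorem DPhi_apply_snd (f : V → ℝ) (c : ι → V → ℝ) (z ζ : V × (ι → ℝ)) :
    (DPhi f c z ζ).2 = fun j => ⟪gradient (c j) z.1, ζ.1⟫ := by
  ext j
  simp [DPhi]

theorem hasFDerivAt_Phi (f : V → ℝ) (c : ι → V → ℝ)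
    (hf : ContDiff ℝ 2 f) (hc : ∀ j, ContDiff ℝ 2 (c j)) (z : V × (ι → ℝ)) :
    HasFDerivAt (Phi f c) (DPhi f c z) z := by
  have hgradf : HasFDerivAt (fun w : V × (ι → ℝ) => gradient f w.1)
      ((Hop f z.1).comp (fst ℝ V (ι → ℝ))) z :=
    (((contDiff_gradient' f hf).differentiable one_ne_zero z.1).hasFDerivAt).comp z hasFDerivAt_fst
  have hgradc : ∀ j, HasFDerivAt (fun w : V × (ι → ℝ) => gradient (c j) w.1)
      ((Hop (c j) z.1).comp (fst ℝ V (ι → ℝ))) z := fun j =>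
    (((contDiff_gradient' (c j) (hc j)).differentiable one_ne_zero z.1).hasFDerivAt).comp z
      hasFDerivAt_fst
  apply HasFDerivAt.prodMk
  · refine HasFDerivAt.sub hgradf (HasFDerivAt.fun_sum (fun j _ => ?_))
    have hscal : HasFDerivAt (fun w : V × (ι → ℝ) => w.2 j)
        ((ContinuousLinearMap.proj j).comp (snd ℝ V (ι → ℝ))) z :=
      ((ContinuousLinearMap.proj j).comp (snd ℝ V (ι → ℝ))).hasFDerivAt
    exact hscal.smul (hgradc j)
  · apply hasFDerivAt_pi''
    intro j
    have hd : HasFDerivAt (fun w : V × (ι → ℝ) => c j w.1)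
        ((fderiv ℝ (c j) z.1).comp (fst ℝ V (ι → ℝ))) z :=
      (((hc j).differentiable (by norm_num) z.1).hasFDerivAt).comp z hasFDerivAt_fst
    have heq : ((ContinuousLinearMap.proj j).comp
        (ContinuousLinearMap.pi (fun j => (innerSL ℝ (gradient (c j) z.1)).comp (fst ℝ V (ι → ℝ)))))
        = (fderiv ℝ (c j) z.1).comp (fst ℝ V (ι → ℝ)) := by
      ext v
      · exact toDual_symm_apply
      · simp
    rw [heq]
    exact hd

end SQPAux

section NewtonAux
open Metric

variable {Z : Type*} [NormedAddCommGroup Z] [NormedSpace ℝ Z]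

theorem taylor_bound (Φ : Z → Z) (DΦ : Z → Z →L[ℝ] Z) (z0 : Z) (r K : ℝ) (hK : 0 ≤ K)
    (hdiff : ∀ z ∈ ball z0 r, HasFDerivAt Φ (DΦ z) z)
    (hlip : ∀ z ∈ ball z0 r, ‖DΦ z - DΦ z0‖ ≤ K * ‖z - z0‖)
    (z : Z) (hz : z ∈ ball z0 r) :
    ‖Φ z - Φ z0 - DΦ z0 (z - z0)‖ ≤ K * ‖z - z0‖ ^ 2 := by
  have hr : (0:ℝ) < r := lt_of_le_of_lt dist_nonneg hz
  have hz0 : z0 ∈ ball z0 r := mem_ball_self hr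
  have hsub : segment ℝ z0 z ⊆ ball z0 r := (convex_ball z0 r).segment_subset hz0 hz
  have hseg : ∀ w ∈ segment ℝ z0 z, ‖w - z0‖ ≤ ‖z - z0‖ := by
    intro w hw
    rw [segment_eq_image'] at hw
    obtain ⟨t, ht, rfl⟩ := hw
    rw [add_sub_cancel_left, norm_smul, Real.norm_eq_abs, abs_of_nonneg ht.1]
    nlinarith [norm_nonneg (z - z0), ht.2]
  have key := Convex.norm_image_sub_le_of_norm_hasFDerivWithin_le
    (f := fun w => Φ w - DΦ z0 w) (f' := fun w => DΦ w - DΦ z0)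
    (fun w hw => ((hdiff w (hsub hw)).sub ((DΦ z0).hasFDerivAt)).hasFDerivWithinAt)
    (fun w hw => le_trans (hlip w (hsub hw))
      (mul_le_mul_of_nonneg_left (hseg w hw) hK))
    (convex_segment z0 z) (left_mem_segment ℝ z0 z) (right_mem_segment ℝ z0 z)
  calc ‖Φ z - Φ z0 - DΦ z0 (z - z0)‖
      = ‖(Φ z - DΦ z0 z) - (Φ z0 - DΦ z0 z0)‖ := by rw [map_sub]; congr 1; abel
    _ ≤ K * ‖z - z0‖ * ‖z - z0‖ := key
    _ = K * ‖z - z0‖ ^ 2 := by ring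

theorem newton_step (Φ : Z → Z) (DΦ : Z → Z →L[ℝ] Z) (z0 : Z) (T : Z ≃L[ℝ] Z)
    (hT : (T : Z →L[ℝ] Z) = DΦ z0) (r K : ℝ) (hK : 0 ≤ K)
    (hdiff : ∀ z ∈ ball z0 r, HasFDerivAt Φ (DΦ z) z)
    (hlip : ∀ z ∈ ball z0 r, ‖DΦ z - DΦ z0‖ ≤ K * ‖z - z0‖)
    (hΦ0 : Φ z0 = 0)
    (z Δ : Z) (hz : z ∈ ball z0 r)
    (hsmall : ‖(T.symm : Z →L[ℝ] Z)‖ * (K * ‖z - z0‖) ≤ 1 / 2)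
    (hNewton : Φ z + DΦ z Δ = 0) :
    ‖z + Δ - z0‖ ≤ 4 * ‖(T.symm : Z →L[ℝ] Z)‖ * K * ‖z - z0‖ ^ 2 := by
  set S := ‖(T.symm : Z →L[ℝ] Z)‖ with hS
  set e := z - z0 with he
  set e' := z + Δ - z0 with he'
  have hΔ : Δ = e' - e := by rw [he', he]; abel
  have hDz : DΦ z Δ = -Φ z := eq_neg_of_add_eq_zero_left (by rw [add_comm]; exact hNewton)
  have hTe' : (T : Z →L[ℝ] Z) e' = -(Φ z - Φ z0 - DΦ z0 e) + ((T : Z →L[ℝ] Z) - DΦ z) (e' - e) := by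
    have h1 : (T : Z →L[ℝ] Z) e' = (T : Z →L[ℝ] Z) e + (T : Z →L[ℝ] Z) (e' - e) := by
      rw [← map_add]; congr 1; abel
    rw [h1, ContinuousLinearMap.sub_apply, hΦ0, ← hΔ, hDz, hT]
    abel
  have hb1 : ‖Φ z - Φ z0 - DΦ z0 e‖ ≤ K * ‖e‖ ^ 2 :=
    taylor_bound Φ DΦ z0 r K hK hdiff hlip z hz
  have hb2 : ‖((T : Z →L[ℝ] Z) - DΦ z) (e' - e)‖ ≤ K * ‖e‖ * (‖e'‖ + ‖e‖) := by
    calc ‖((T : Z →L[ℝ] Z) - DΦ z) (e' - e)‖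
        ≤ ‖(T : Z →L[ℝ] Z) - DΦ z‖ * ‖e' - e‖ := ContinuousLinearMap.le_opNorm _ _
      _ ≤ (K * ‖e‖) * (‖e'‖ + ‖e‖) := by
          apply mul_le_mul
          · rw [hT, ← norm_sub_rev]; exact hlip z hz
          · exact le_trans (norm_sub_le _ _) le_rfl
          · exact norm_nonneg _
          · positivity
      _ = K * ‖e‖ * (‖e'‖ + ‖e‖) := by ring
  have he'bound : ‖e'‖ ≤ S * (K * ‖e‖ ^ 2 + K * ‖e‖ * (‖e'‖ + ‖e‖)) := by
    have h1 : e' = (T.symm : Z →L[ℝ] Z) ((T : Z →L[ℝ] Z) e') := by simp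
    calc ‖e'‖ = ‖(T.symm : Z →L[ℝ] Z) ((T : Z →L[ℝ] Z) e')‖ := by rw [← h1]
      _ ≤ S * ‖(T : Z →L[ℝ] Z) e'‖ := ContinuousLinearMap.le_opNorm _ _
      _ ≤ S * (K * ‖e‖ ^ 2 + K * ‖e‖ * (‖e'‖ + ‖e‖)) := by
          apply mul_le_mul_of_nonneg_left _ (norm_nonneg _)
          rw [hTe']
          refine le_trans (norm_add_le _ _) (add_le_add ?_ hb2)
          rw [norm_neg]; exact hb1
  have hSnn : 0 ≤ S := norm_nonneg _
  nlinarith [norm_nonneg e', norm_nonneg e, mul_nonneg (mul_nonneg hSnn hK) (norm_nonneg e)]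

end NewtonAux

set_option maxHeartbeats 2000000 in
set_option synthInstance.maxHeartbeats 200000 in
/-- Quadratic SQP step: as in Statement 18 but with the exact
Lagrangian Hessians `B_ℓ = ∇²ₓₓL(x_ℓ,μ_ℓ,λ_ℓ)` and multiplier estimates with
`‖μ_ℓ − μ*‖ + ‖λ_ℓ − λ*‖ = O(‖x_ℓ − x*‖)`; then
`‖x_ℓ + d_ℓ − x*‖ = O(‖x_ℓ − x*‖²)`. -/
theorem stmt19 {n mE mI : ℕ}
    (f : EuclideanSpace ℝ (Fin n) → ℝ)
    (h : Fin mE → EuclideanSpace ℝ (Fin n) → ℝ)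
    (g : Fin mI → EuclideanSpace ℝ (Fin n) → ℝ)
    (hf : ContDiff ℝ 2 f) (hh : ∀ i, ContDiff ℝ 2 (h i)) (hg : ∀ i, ContDiff ℝ 2 (g i))
    (xs : EuclideanSpace ℝ (Fin n))
    -- locally Lipschitz second derivatives near x*
    (hfL : ∃ U ∈ nhds xs, ∃ K : ℝ, ∀ a ∈ U, ∀ b ∈ U,
      ‖iteratedFDeriv ℝ 2 f a - iteratedFDeriv ℝ 2 f b‖ ≤ K * ‖a - b‖)
    (hhL : ∀ i, ∃ U ∈ nhds xs, ∃ K : ℝ, ∀ a ∈ U, ∀ b ∈ U,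
      ‖iteratedFDeriv ℝ 2 (h i) a - iteratedFDeriv ℝ 2 (h i) b‖ ≤ K * ‖a - b‖)
    (hgL : ∀ i, ∃ U ∈ nhds xs, ∃ K : ℝ, ∀ a ∈ U, ∀ b ∈ U,
      ‖iteratedFDeriv ℝ 2 (g i) a - iteratedFDeriv ℝ 2 (g i) b‖ ≤ K * ‖a - b‖)
    (E : Finset (Fin mE)) (A : Finset (Fin mI))
    (hE : ∀ i ∈ E, h i xs = 0) (hA : ∀ i ∈ A, g i xs = 0)
    -- the active gradients are linearly independent
    (hLI : LinearIndependent ℝ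
      (fun j : {i : Fin mE // i ∈ E} ⊕ {i : Fin mI // i ∈ A} =>
        Sum.elim (fun i => gradient (h i.1) xs) (fun i => gradient (g i.1) xs) j))
    (μstar : Fin mE → ℝ) (lamstar : Fin mI → ℝ)
    -- stationarity at (x*,μ*,λ*)
    (hstat : gradient f xs - (∑ i ∈ E, μstar i • gradient (h i) xs)
        - (∑ i ∈ A, lamstar i • gradient (g i) xs) = 0)
    -- second-order condition: dᵀ∇²ₓₓL(x*,μ*,λ*)d ≥ γ‖d‖² on the critical subspace
    (γ : ℝ) (hγ : 0 < γ)
    (hSOC : ∀ d : EuclideanSpace ℝ (Fin n),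
      (∀ i ∈ E, ⟪gradient (h i) xs, d⟫ = 0) →
      (∀ i ∈ A, ⟪gradient (g i) xs, d⟫ = 0) →
      γ * ‖d‖ ^ 2 ≤ iteratedFDeriv ℝ 2
        (fun x => f x - (∑ i ∈ E, μstar i * h i x) - (∑ i ∈ A, lamstar i * g i x))
        xs ![d, d])
    -- the sequences of the inner SQP iteration
    (x d : ℕ → EuclideanSpace ℝ (Fin n))
    (μ : ℕ → Fin mE → ℝ) (lam : ℕ → Fin mI → ℝ)
    (hx : Tendsto x atTop (nhds xs))
    (hμ : Tendsto μ atTop (nhds μstar)) (hlam : Tendsto lam atTop (nhds lamstar))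
    -- ‖μ_ℓ − μ*‖ + ‖λ_ℓ − λ*‖ = O(‖x_ℓ − x*‖)
    (hO : ∃ C : ℝ, ∀ᶠ ℓ in atTop,
      ‖μ ℓ - μstar‖ + ‖lam ℓ - lamstar‖ ≤ C * ‖x ℓ - xs‖)
    -- B_ℓ is the exact Lagrangian Hessian ∇²ₓₓL(x_ℓ,μ_ℓ,λ_ℓ)
    (B : ℕ → EuclideanSpace ℝ (Fin n) →L[ℝ] EuclideanSpace ℝ (Fin n))
    (hB : ∀ ℓ, ∀ a b : EuclideanSpace ℝ (Fin n),
      ⟪B ℓ a, b⟫ = iteratedFDeriv ℝ 2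
        (fun y => f y - (∑ i ∈ E, μ ℓ i * h i y) - (∑ i ∈ A, lam ℓ i * g i y))
        (x ℓ) ![a, b])
    -- KKT system of the SQP subproblem at each iteration
    (hstatℓ : ∀ ℓ, gradient f (x ℓ) + B ℓ (d ℓ)
        - (∑ i ∈ E, μ (ℓ + 1) i • gradient (h i) (x ℓ))
        - (∑ i ∈ A, lam (ℓ + 1) i • gradient (g i) (x ℓ)) = 0)
    (hlinE : ∀ ℓ, ∀ i ∈ E, h i (x ℓ) + ⟪gradient (h i) (x ℓ), d ℓ⟫ = 0)
    (hlinA : ∀ ℓ, ∀ i ∈ A, g i (x ℓ) + ⟪gradient (g i) (x ℓ), d ℓ⟫ = 0) :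
    ∃ M : ℝ, ∀ᶠ ℓ in atTop, ‖x ℓ + d ℓ - xs‖ ≤ M * ‖x ℓ - xs‖ ^ 2 := by
  classical
  set c : ({i : Fin mE // i ∈ E} ⊕ {i : Fin mI // i ∈ A}) → EuclideanSpace ℝ (Fin n) → ℝ :=
    Sum.elim (fun i => h i.1) (fun i => g i.1) with hcdef
  have hc : ∀ j, ContDiff ℝ 2 (c j) := by rintro (i | i); exacts [hh i.1, hg i.1]
  have hc0 : ∀ j, c j xs = 0 := by rintro (i | i); exacts [hE i.1 i.2, hA i.1 i.2]
  set ws : ({i : Fin mE // i ∈ E} ⊕ {i : Fin mI // i ∈ A}) → ℝ :=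
    Sum.elim (fun i => μstar i.1) (fun i => lamstar i.1) with hwsdef
  set wseq : ℕ → ({i : Fin mE // i ∈ E} ⊕ {i : Fin mI // i ∈ A}) → ℝ :=
    fun ℓ => Sum.elim (fun i => μ ℓ i.1) (fun i => lam ℓ i.1) with hwseqdef
  -- conversion of vector sums
  have conv1 : ∀ (μv : Fin mE → ℝ) (lamv : Fin mI → ℝ) (y : EuclideanSpace ℝ (Fin n))
      (F : Fin mE → EuclideanSpace ℝ (Fin n) → EuclideanSpace ℝ (Fin n))
      (G : Fin mI → EuclideanSpace ℝ (Fin n) → EuclideanSpace ℝ (Fin n)),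
      ∑ j, (Sum.elim (fun i : {i : Fin mE // i ∈ E} => μv i.1 • F i.1 y)
        (fun i : {i : Fin mI // i ∈ A} => lamv i.1 • G i.1 y)) j
        = (∑ i ∈ E, μv i • F i y) + (∑ i ∈ A, lamv i • G i y) := by
    intro μv lamv y F G
    rw [Fintype.sum_sum_type]
    congr 1
    · simp only [Sum.elim_inl]
      exact Finset.sum_coe_sort E (fun i => μv i • F i y)
    · simp only [Sum.elim_inr]
      exact Finset.sum_coe_sort A (fun i => lamv i • G i y)
  -- conversion of Lagrangian functions
  have convL : ∀ (μv : Fin mE → ℝ) (lamv : Fin mI → ℝ),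
      (fun y => f y - ∑ j, (Sum.elim (fun i : {i : Fin mE // i ∈ E} => μv i.1)
          (fun i : {i : Fin mI // i ∈ A} => lamv i.1)) j * c j y)
      = (fun y => f y - (∑ i ∈ E, μv i * h i y) - (∑ i ∈ A, lamv i * g i y)) := by
    intro μv lamv
    funext y
    rw [Fintype.sum_sum_type]
    simp only [Sum.elim_inl, Sum.elim_inr, hcdef]
    rw [Finset.sum_coe_sort E (fun i => μv i * h i y),
      Finset.sum_coe_sort A (fun i => lamv i * g i y)]
    ring
  -- vector-sum conversion with general scalar families
  have conv1' : ∀ (μv : Fin mE → ℝ) (lamv : Fin mI → ℝ) (y : EuclideanSpace ℝ (Fin n))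
      (F : Fin mE → EuclideanSpace ℝ (Fin n) → EuclideanSpace ℝ (Fin n))
      (G : Fin mI → EuclideanSpace ℝ (Fin n) → EuclideanSpace ℝ (Fin n)),
      ∑ j, (Sum.elim (fun i : {i : Fin mE // i ∈ E} => μv i.1)
          (fun i : {i : Fin mI // i ∈ A} => lamv i.1)) j
          • (Sum.elim (fun i : {i : Fin mE // i ∈ E} => F i.1 y)
          (fun i : {i : Fin mI // i ∈ A} => G i.1 y)) j
        = (∑ i ∈ E, μv i • F i y) + (∑ i ∈ A, lamv i • G i y) := by
    intro μv lamv y F G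
    rw [← conv1 μv lamv y F G]
    refine Finset.sum_congr rfl ?_
    rintro (i | i) _ <;> simp
  have hgradc_elim : ∀ (y : EuclideanSpace ℝ (Fin n)),
      (fun j : {i : Fin mE // i ∈ E} ⊕ {i : Fin mI // i ∈ A} => gradient (c j) y)
        = Sum.elim (fun i : {i : Fin mE // i ∈ E} => gradient (h i.1) y)
            (fun i : {i : Fin mI // i ∈ A} => gradient (g i.1) y) := by
    intro y
    funext j
    cases j <;> rfl
  have hLI' : LinearIndependent ℝ
      (fun j : {i : Fin mE // i ∈ E} ⊕ {i : Fin mI // i ∈ A} => gradient (c j) xs) := by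
    rw [hgradc_elim xs]; exact hLI
  -- Φ vanishes at the base point
  have hPhi0 : Phi f c (xs, ws) = 0 := by
    have hfst : gradient f xs - ∑ j, ws j • gradient (c j) xs = 0 := by
      have : ∑ j, ws j • gradient (c j) xs
          = (∑ i ∈ E, μstar i • gradient (h i) xs) + (∑ i ∈ A, lamstar i • gradient (g i) xs) := by
        rw [← conv1' μstar lamstar xs (fun i => gradient (h i)) (fun i => gradient (g i))]
        refine Finset.sum_congr rfl ?_
        rintro (i | i) _ <;> rfl
      rw [this, ← sub_sub]
      exact hstat
    have h2 : (fun j => c j xs) = (0 : ({i : Fin mE // i ∈ E} ⊕ {i : Fin mI // i ∈ A}) → ℝ) :=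
      funext fun j => hc0 j
    show (gradient f xs - ∑ j, ws j • gradient (c j) xs, fun j => c j xs) = 0
    rw [hfst, h2]
    rfl
  -- identification of B with the Lagrangian Hessian
  have hBd : ∀ ℓ (a : EuclideanSpace ℝ (Fin n)),
      B ℓ a = Hop f (x ℓ) a - ∑ j, wseq ℓ j • Hop (c j) (x ℓ) a := by
    intro ℓ a
    refine ext_inner_right ℝ (fun b => ?_)
    rw [hB ℓ a b, ← convL (μ ℓ) (lam ℓ)]
    exact (lag_pair f c hf hc (wseq ℓ) (x ℓ) a b).symm
  -- the SQP system is the Newton system for Φ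
  have hNewt : ∀ ℓ, Phi f c (x ℓ, wseq ℓ)
      + DPhi f c (x ℓ, wseq ℓ) (d ℓ, wseq (ℓ + 1) - wseq ℓ) = 0 := by
    intro ℓ
    have hsnd : (fun j => c j (x ℓ)) + (fun j => ⟪gradient (c j) (x ℓ), d ℓ⟫)
        = (0 : ({i : Fin mE // i ∈ E} ⊕ {i : Fin mI // i ∈ A}) → ℝ) := by
      funext j
      cases j with
      | inl i => exact hlinE ℓ i.1 i.2
      | inr i => exact hlinA ℓ i.1 i.2
    have hstat2 : gradient f (x ℓ) + B ℓ (d ℓ) - ∑ j, wseq (ℓ + 1) j • gradient (c j) (x ℓ) = 0 := by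
      have hsum : ∑ j, wseq (ℓ + 1) j • gradient (c j) (x ℓ)
          = (∑ i ∈ E, μ (ℓ + 1) i • gradient (h i) (x ℓ))
            + (∑ i ∈ A, lam (ℓ + 1) i • gradient (g i) (x ℓ)) := by
        rw [← conv1' (μ (ℓ + 1)) (lam (ℓ + 1)) (x ℓ) (fun i => gradient (h i)) (fun i => gradient (g i))]
        refine Finset.sum_congr rfl ?_
        rintro (i | i) _ <;> rfl
      rw [hsum, ← sub_sub]
      exact hstatℓ ℓ
    rw [hBd ℓ (d ℓ)] at hstat2
    have hfst : (gradient f (x ℓ) - ∑ j, wseq ℓ j • gradient (c j) (x ℓ))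
        + (Hop f (x ℓ) (d ℓ) - ∑ j, (wseq ℓ j • Hop (c j) (x ℓ) (d ℓ)
            + (wseq (ℓ + 1) - wseq ℓ) j • gradient (c j) (x ℓ))) = 0 := by
      simp only [Pi.sub_apply, sub_smul, Finset.sum_add_distrib, Finset.sum_sub_distrib]
      rw [← hstat2]
      abel
    rw [Prod.ext_iff]
    constructor
    · have e1 : (Phi f c (x ℓ, wseq ℓ)
          + DPhi f c (x ℓ, wseq ℓ) (d ℓ, wseq (ℓ + 1) - wseq ℓ)).1
          = (Phi f c (x ℓ, wseq ℓ)).1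
            + (DPhi f c (x ℓ, wseq ℓ) (d ℓ, wseq (ℓ + 1) - wseq ℓ)).1 := rfl
      rw [e1, DPhi_apply_fst]
      exact hfst
    · have e2 : (Phi f c (x ℓ, wseq ℓ)
          + DPhi f c (x ℓ, wseq ℓ) (d ℓ, wseq (ℓ + 1) - wseq ℓ)).2
          = (Phi f c (x ℓ, wseq ℓ)).2
            + (DPhi f c (x ℓ, wseq ℓ) (d ℓ, wseq (ℓ + 1) - wseq ℓ)).2 := rfl
      rw [e2, DPhi_apply_snd]
      exact hsnd
  -- kernel of the KKT operator is trivial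
  have hker : ∀ ζ : EuclideanSpace ℝ (Fin n) × (({i : Fin mE // i ∈ E} ⊕ {i : Fin mI // i ∈ A}) → ℝ),
      DPhi f c (xs, ws) ζ = 0 → ζ = 0 := by
    rintro ⟨dx, dw⟩ hζ
    have h2 : ∀ j, ⟪gradient (c j) xs, dx⟫ = 0 := by
      intro j
      have hs := congrArg Prod.snd hζ
      rw [DPhi_apply_snd] at hs
      exact congrFun hs j
    have h1 := congrArg Prod.fst hζ
    rw [DPhi_apply_fst, Finset.sum_add_distrib] at h1
    simp only [Prod.fst_zero] at h1
    have hdx : dx = 0 := by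
      have hγle := hSOC dx (fun i hi => h2 (Sum.inl ⟨i, hi⟩)) (fun i hi => h2 (Sum.inr ⟨i, hi⟩))
      rw [← convL μstar lamstar, ← hwsdef,
        ← lag_pair f c hf hc ws xs dx dx] at hγle
      have h3 : Hop f xs dx - ∑ j, ws j • Hop (c j) xs dx
          - ∑ j, dw j • gradient (c j) xs = 0 := by
        rw [← h1]; abel
      have h4 := sub_eq_zero.mp h3
      have hz : ⟪∑ j, dw j • gradient (c j) xs, dx⟫ = 0 := by
        rw [sum_inner]
        refine Finset.sum_eq_zero (fun j _ => ?_)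
        rw [real_inner_smul_left, h2 j, mul_zero]
      rw [h4, hz] at hγle
      have h6 : ‖dx‖ ^ 2 = 0 := le_antisymm (by nlinarith) (sq_nonneg _)
      exact norm_eq_zero.mp (sq_eq_zero_iff.mp h6)
    rw [hdx] at h1
    simp only [map_zero, smul_zero, Finset.sum_const_zero, zero_sub, zero_add,
      neg_eq_zero] at h1
    have hdw : ∀ j, dw j = 0 := Fintype.linearIndependent_iff.mp hLI' dw h1
    rw [Prod.mk_eq_zero]
    exact ⟨hdx, funext hdw⟩
  -- the KKT operator as a continuous linear equivalence
  have hinj : Function.Injective (DPhi f c (xs, ws)) := by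
    intro a b hab
    have hz : DPhi f c (xs, ws) (a - b) = 0 := by rw [map_sub, hab, sub_self]
    exact sub_eq_zero.mp (hker _ hz)
  have hbij : Function.Bijective ((DPhi f c (xs, ws)).toLinearMap) :=
    ⟨hinj, LinearMap.injective_iff_surjective.mp hinj⟩
  let T := (LinearEquiv.ofBijective _ hbij).toContinuousLinearEquiv
  have hT : (T : _ →L[ℝ] _) = DPhi f c (xs, ws) := ContinuousLinearMap.ext (fun ζ => rfl)
  -- local Lipschitz continuity of DΦ at the base point
  obtain ⟨Uf, hUf, Kf0, hKf⟩ := hfL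
  have hcL : ∀ j : {i : Fin mE // i ∈ E} ⊕ {i : Fin mI // i ∈ A},
      ∃ U ∈ nhds xs, ∃ K : ℝ, ∀ a ∈ U, ∀ b ∈ U,
      ‖iteratedFDeriv ℝ 2 (c j) a - iteratedFDeriv ℝ 2 (c j) b‖ ≤ K * ‖a - b‖ := by
    rintro (i | i); exacts [hhL i.1, hgL i.1]
  choose U hU Kc0 hKc using hcL
  have hS : Uf ∩ ⋂ j, U j ∈ nhds xs := Filter.inter_mem hUf (Filter.iInter_mem.mpr hU)
  obtain ⟨r₀, hr₀, hball⟩ := Metric.mem_nhds_iff.mp hS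
  have hmemf : ∀ y ∈ Metric.ball xs r₀, y ∈ Uf := fun y hy => (hball hy).1
  have hmemc : ∀ j, ∀ y ∈ Metric.ball xs r₀, y ∈ U j := fun j y hy =>
    Set.mem_iInter.mp (hball hy).2 j
  have hxscen : xs ∈ Metric.ball xs r₀ := Metric.mem_ball_self hr₀
  set Kf : ℝ := max Kf0 0 with hKfdef
  set Kc' : _ → ℝ := fun j => max (Kc0 j) 0 with hKc'def
  set L : _ → ℝ := fun j => ‖Hop (c j) xs‖ + Kc' j * r₀ with hLdef
  set Mw : _ → ℝ := fun j => |ws j| + r₀ with hMwdef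
  set Kbig : ℝ := Kf + (∑ j, (‖Hop (c j) xs‖ + Mw j * Kc' j + L j)) + ∑ j, L j with hKbigdef
  have hKc'nn : ∀ j, 0 ≤ Kc' j := fun j => le_max_right _ _
  have hLnn : ∀ j, 0 ≤ L j := fun j => add_nonneg (norm_nonneg _)
    (mul_nonneg (hKc'nn j) hr₀.le)
  have hMwnn : ∀ j, 0 ≤ Mw j := fun j => add_nonneg (abs_nonneg _) hr₀.le
  have hKbignn : 0 ≤ Kbig := by
    refine add_nonneg (add_nonneg (le_max_right _ _) ?_) ?_ <;>
      refine Finset.sum_nonneg (fun j _ => ?_)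
    · exact add_nonneg (add_nonneg (norm_nonneg _) (mul_nonneg (hMwnn j) (hKc'nn j))) (hLnn j)
    · exact hLnn j
  have hHf : ∀ y ∈ Metric.ball xs r₀, ‖Hop f y - Hop f xs‖ ≤ Kf * ‖y - xs‖ := by
    intro y hy
    refine le_trans (H_sub_opnorm f y xs) (le_trans (hKf y (hmemf y hy) xs (hmemf xs hxscen)) ?_)
    exact mul_le_mul_of_nonneg_right (le_max_left _ _) (norm_nonneg _)
  have hHc : ∀ j, ∀ y ∈ Metric.ball xs r₀,
      ‖Hop (c j) y - Hop (c j) xs‖ ≤ Kc' j * ‖y - xs‖ := by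
    intro j y hy
    refine le_trans (H_sub_opnorm (c j) y xs)
      (le_trans (hKc j y (hmemc j y hy) xs (hmemc j xs hxscen)) ?_)
    exact mul_le_mul_of_nonneg_right (le_max_left _ _) (norm_nonneg _)
  have hHcB : ∀ j, ∀ y ∈ Metric.ball xs r₀, ‖Hop (c j) y‖ ≤ L j := by
    intro j y hy
    have hy' : ‖y - xs‖ ≤ r₀ := (mem_ball_iff_norm.mp hy).le
    have h1 : Hop (c j) y = Hop (c j) xs + (Hop (c j) y - Hop (c j) xs) := by abel
    rw [h1]
    refine le_trans (norm_add_le _ _) ?_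
    have h2 := le_trans (hHc j y hy) (mul_le_mul_of_nonneg_left hy' (hKc'nn j))
    exact add_le_add le_rfl h2
  have hglip : ∀ j, ∀ y ∈ Metric.ball xs r₀,
      ‖gradient (c j) y - gradient (c j) xs‖ ≤ L j * ‖y - xs‖ := fun j y hy =>
    gradient_lip (c j) (hc j) xs r₀ (L j) (hHcB j) y xs hy hxscen
  have hlip : ∀ z ∈ Metric.ball ((xs, ws) :
        EuclideanSpace ℝ (Fin n) × (({i : Fin mE // i ∈ E} ⊕ {i : Fin mI // i ∈ A}) → ℝ)) r₀,
      ‖DPhi f c z - DPhi f c (xs, ws)‖ ≤ Kbig * ‖z - (xs, ws)‖ := by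
    rintro ⟨xz, wz⟩ hz
    rw [mem_ball_iff_norm] at hz
    set D := ‖((xz, wz) - (xs, ws) :
      EuclideanSpace ℝ (Fin n) × (({i : Fin mE // i ∈ E} ⊕ {i : Fin mI // i ∈ A}) → ℝ))‖ with hDdef
    have hDnn : 0 ≤ D := norm_nonneg _
    have hxzD : ‖xz - xs‖ ≤ D := norm_fst_le ((xz, wz) - ((xs, ws) :
      EuclideanSpace ℝ (Fin n) × (({i : Fin mE // i ∈ E} ⊕ {i : Fin mI // i ∈ A}) → ℝ)))
    have hwzD : ‖wz - ws‖ ≤ D := norm_snd_le ((xz, wz) - ((xs, ws) :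
      EuclideanSpace ℝ (Fin n) × (({i : Fin mE // i ∈ E} ⊕ {i : Fin mI // i ∈ A}) → ℝ)))
    have hxball : xz ∈ Metric.ball xs r₀ := by
      rw [mem_ball_iff_norm]; exact lt_of_le_of_lt hxzD hz
    have hwj : ∀ j, |wz j - ws j| ≤ D := by
      intro j
      have := norm_le_pi_norm (wz - ws) j
      simpa using le_trans this hwzD
    have hwzb : ∀ j, |wz j| ≤ Mw j := by
      intro j
      have h1 : |wz j| ≤ |ws j| + |wz j - ws j| := by
        have := abs_sub_abs_le_abs_sub (wz j) (ws j)
        nlinarith [abs_nonneg (wz j - ws j)]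
      refine le_trans h1 ?_
      exact add_le_add le_rfl (le_trans (hwj j) hz.le)
    refine ContinuousLinearMap.opNorm_le_bound _ (mul_nonneg hKbignn hDnn) (fun ζ => ?_)
    obtain ⟨ζx, ζw⟩ := ζ
    have hζx : ‖ζx‖ ≤ ‖((ζx, ζw) :
      EuclideanSpace ℝ (Fin n) × (({i : Fin mE // i ∈ E} ⊕ {i : Fin mI // i ∈ A}) → ℝ))‖ :=
      norm_fst_le ((ζx, ζw) : EuclideanSpace ℝ (Fin n) × (({i : Fin mE // i ∈ E} ⊕ {i : Fin mI // i ∈ A}) → ℝ))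
    have hζw : ∀ j, |ζw j| ≤ ‖((ζx, ζw) :
      EuclideanSpace ℝ (Fin n) × (({i : Fin mE // i ∈ E} ⊕ {i : Fin mI // i ∈ A}) → ℝ))‖ := by
      intro j
      exact le_trans (by simpa using norm_le_pi_norm ζw j)
        (norm_snd_le ((ζx, ζw) : EuclideanSpace ℝ (Fin n) × (({i : Fin mE // i ∈ E} ⊕ {i : Fin mI // i ∈ A}) → ℝ)))
    set N := ‖((ζx, ζw) :
      EuclideanSpace ℝ (Fin n) × (({i : Fin mE // i ∈ E} ⊕ {i : Fin mI // i ∈ A}) → ℝ))‖ with hNdef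
    have hNnn : 0 ≤ N := norm_nonneg _
    rw [ContinuousLinearMap.sub_apply, Prod.norm_def]
    refine max_le ?_ ?_
    · rw [Prod.fst_sub, DPhi_apply_fst, DPhi_apply_fst]
      have step : (Hop f xz ζx - ∑ j, (wz j • Hop (c j) xz ζx + ζw j • gradient (c j) xz))
          - (Hop f xs ζx - ∑ j, (ws j • Hop (c j) xs ζx + ζw j • gradient (c j) xs))
          = (Hop f xz - Hop f xs) ζx
            - ∑ j, ((wz j - ws j) • Hop (c j) xs ζx
              + wz j • ((Hop (c j) xz - Hop (c j) xs) ζx)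
              + ζw j • (gradient (c j) xz - gradient (c j) xs)) := by
        simp only [ContinuousLinearMap.sub_apply, smul_sub, sub_smul,
          Finset.sum_add_distrib, Finset.sum_sub_distrib]
        abel
      rw [step]
      have hterm : ∀ j, ‖(wz j - ws j) • Hop (c j) xs ζx
          + wz j • ((Hop (c j) xz - Hop (c j) xs) ζx)
          + ζw j • (gradient (c j) xz - gradient (c j) xs)‖
          ≤ (‖Hop (c j) xs‖ + Mw j * Kc' j + L j) * (D * N) := by
        intro j
        have t1 : ‖(wz j - ws j) • Hop (c j) xs ζx‖ ≤ ‖Hop (c j) xs‖ * (D * N) := by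
          rw [norm_smul, Real.norm_eq_abs]
          have hb := (Hop (c j) xs).le_opNorm ζx
          calc |wz j - ws j| * ‖Hop (c j) xs ζx‖
              ≤ D * (‖Hop (c j) xs‖ * N) := by
                apply mul_le_mul (hwj j) (le_trans hb ?_) (norm_nonneg _) hDnn
                exact mul_le_mul_of_nonneg_left hζx (norm_nonneg _)
            _ = ‖Hop (c j) xs‖ * (D * N) := by ring
        have t2 : ‖wz j • ((Hop (c j) xz - Hop (c j) xs) ζx)‖ ≤ Mw j * Kc' j * (D * N) := by
          rw [norm_smul, Real.norm_eq_abs]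
          have hb := (Hop (c j) xz - Hop (c j) xs).le_opNorm ζx
          have hb2 : ‖(Hop (c j) xz - Hop (c j) xs) ζx‖ ≤ Kc' j * D * N := by
            refine le_trans hb ?_
            have h3 := le_trans (hHc j xz hxball)
              (mul_le_mul_of_nonneg_left hxzD (hKc'nn j))
            calc ‖Hop (c j) xz - Hop (c j) xs‖ * ‖ζx‖
                ≤ (Kc' j * D) * N := by
                  apply mul_le_mul h3 hζx (norm_nonneg _)
                  exact mul_nonneg (hKc'nn j) hDnn
              _ = Kc' j * D * N := rfl
          calc |wz j| * ‖(Hop (c j) xz - Hop (c j) xs) ζx‖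
              ≤ Mw j * (Kc' j * D * N) := by
                apply mul_le_mul (hwzb j) hb2 (norm_nonneg _) (hMwnn j)
            _ = Mw j * Kc' j * (D * N) := by ring
        have t3 : ‖ζw j • (gradient (c j) xz - gradient (c j) xs)‖ ≤ L j * (D * N) := by
          rw [norm_smul, Real.norm_eq_abs]
          have h3 := le_trans (hglip j xz hxball)
            (mul_le_mul_of_nonneg_left hxzD (hLnn j))
          calc |ζw j| * ‖gradient (c j) xz - gradient (c j) xs‖
              ≤ N * (L j * D) := by
                apply mul_le_mul (hζw j) h3 (norm_nonneg _) hNnn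
            _ = L j * (D * N) := by ring
        calc ‖(wz j - ws j) • Hop (c j) xs ζx
            + wz j • ((Hop (c j) xz - Hop (c j) xs) ζx)
            + ζw j • (gradient (c j) xz - gradient (c j) xs)‖
            ≤ ‖(wz j - ws j) • Hop (c j) xs ζx‖
              + ‖wz j • ((Hop (c j) xz - Hop (c j) xs) ζx)‖
              + ‖ζw j • (gradient (c j) xz - gradient (c j) xs)‖ :=
              norm_add₃_le
          _ ≤ (‖Hop (c j) xs‖ + Mw j * Kc' j + L j) * (D * N) := by
              rw [add_mul, add_mul]
              exact add_le_add (add_le_add t1 t2) t3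
      have hfmain : ‖(Hop f xz - Hop f xs) ζx‖ ≤ Kf * (D * N) := by
        have hb := (Hop f xz - Hop f xs).le_opNorm ζx
        refine le_trans hb ?_
        have h3 := le_trans (hHf xz hxball) (mul_le_mul_of_nonneg_left hxzD (le_max_right Kf0 0))
        calc ‖Hop f xz - Hop f xs‖ * ‖ζx‖ ≤ (Kf * D) * N := by
              apply mul_le_mul h3 hζx (norm_nonneg _)
              exact mul_nonneg (le_max_right _ _) hDnn
          _ = Kf * (D * N) := by ring
      calc ‖(Hop f xz - Hop f xs) ζx - ∑ j, ((wz j - ws j) • Hop (c j) xs ζx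
              + wz j • ((Hop (c j) xz - Hop (c j) xs) ζx)
              + ζw j • (gradient (c j) xz - gradient (c j) xs))‖
          ≤ ‖(Hop f xz - Hop f xs) ζx‖ + ‖∑ j, ((wz j - ws j) • Hop (c j) xs ζx
              + wz j • ((Hop (c j) xz - Hop (c j) xs) ζx)
              + ζw j • (gradient (c j) xz - gradient (c j) xs))‖ := norm_sub_le _ _
        _ ≤ Kf * (D * N) + ∑ j, (‖Hop (c j) xs‖ + Mw j * Kc' j + L j) * (D * N) := by
            refine add_le_add hfmain (le_trans (norm_sum_le _ _) ?_)
            exact Finset.sum_le_sum (fun j _ => hterm j)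
        _ = (Kf + ∑ j, (‖Hop (c j) xs‖ + Mw j * Kc' j + L j)) * (D * N) := by
            rw [← Finset.sum_mul, add_mul]
        _ ≤ Kbig * D * N := by
            rw [hKbigdef]
            have h4 : 0 ≤ (∑ j, L j) * (D * N) :=
              mul_nonneg (Finset.sum_nonneg (fun j _ => hLnn j)) (mul_nonneg hDnn hNnn)
            nlinarith
    · rw [Prod.snd_sub, DPhi_apply_snd, DPhi_apply_snd]
      have hbnd : (0:ℝ) ≤ Kbig * D * N := by positivity
      refine le_trans ?_ (le_refl (Kbig * D * N))
      rw [show ((fun j => ⟪gradient (c j) xz, ζx⟫) - fun j => ⟪gradient (c j) xs, ζx⟫)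
          = fun j => ⟪gradient (c j) xz - gradient (c j) xs, ζx⟫ from
          funext (fun j => by simp [inner_sub_left])]
      refine (pi_norm_le_iff_of_nonneg hbnd).mpr (fun j => ?_)
      have h1 := abs_real_inner_le_norm (gradient (c j) xz - gradient (c j) xs) ζx
      have h2 := le_trans (hglip j xz hxball) (mul_le_mul_of_nonneg_left hxzD (hLnn j))
      have h3 : L j ≤ Kbig := by
        rw [hKbigdef]
        have h5 : (0:ℝ) ≤ Kf + ∑ j, (‖Hop (c j) xs‖ + Mw j * Kc' j + L j) := by
          refine add_nonneg (le_max_right _ _) (Finset.sum_nonneg (fun j _ => ?_))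
          exact add_nonneg (add_nonneg (norm_nonneg _) (mul_nonneg (hMwnn j) (hKc'nn j))) (hLnn j)
        have h6 : L j ≤ ∑ j', L j' :=
          Finset.single_le_sum (fun j' _ => hLnn j') (Finset.mem_univ j)
        linarith
      calc ‖⟪gradient (c j) xz - gradient (c j) xs, ζx⟫‖
          ≤ ‖gradient (c j) xz - gradient (c j) xs‖ * ‖ζx‖ := by
            rw [Real.norm_eq_abs]; exact h1
        _ ≤ (L j * D) * N := by
            apply mul_le_mul h2 hζx (norm_nonneg _)
            exact mul_nonneg (hLnn j) hDnn
        _ ≤ Kbig * D * N := by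
            have := mul_nonneg hDnn hNnn
            nlinarith
    -- convergence of the combined iterates
  have hwtend : Tendsto wseq atTop (nhds ws) := by
    rw [tendsto_pi_nhds]
    rintro (i | i)
    · exact ((continuous_apply (i.1 : Fin mE)).tendsto μstar).comp hμ
    · exact ((continuous_apply (i.1 : Fin mI)).tendsto lamstar).comp hlam
  have hztend : Tendsto (fun ℓ => ((x ℓ, wseq ℓ) :
      EuclideanSpace ℝ (Fin n) × (({i : Fin mE // i ∈ E} ⊕ {i : Fin mI // i ∈ A}) → ℝ)))
      atTop (nhds (xs, ws)) := hx.prodMk_nhds hwtend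
  obtain ⟨C, hC⟩ := hO
  set S := ‖((T.symm : _ →L[ℝ] _) :
    EuclideanSpace ℝ (Fin n) × (({i : Fin mE // i ∈ E} ⊕ {i : Fin mI // i ∈ A}) → ℝ) →L[ℝ]
    EuclideanSpace ℝ (Fin n) × (({i : Fin mE // i ∈ E} ⊕ {i : Fin mI // i ∈ A}) → ℝ))‖ with hSdef
  have hSnn : 0 ≤ S := norm_nonneg _
  refine ⟨4 * S * Kbig * (1 + |C|) ^ 2, ?_⟩
  have hnorm0 : Tendsto (fun ℓ => ‖((x ℓ, wseq ℓ) :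
      EuclideanSpace ℝ (Fin n) × (({i : Fin mE // i ∈ E} ⊕ {i : Fin mI // i ∈ A}) → ℝ))
      - (xs, ws)‖) atTop (nhds 0) := tendsto_iff_norm_sub_tendsto_zero.mp hztend
  have hev1 : ∀ᶠ ℓ in atTop, ‖((x ℓ, wseq ℓ) :
      EuclideanSpace ℝ (Fin n) × (({i : Fin mE // i ∈ E} ⊕ {i : Fin mI // i ∈ A}) → ℝ))
      - (xs, ws)‖ < r₀ := hnorm0.eventually_lt_const hr₀
  have hev2 : ∀ᶠ ℓ in atTop, S * (Kbig * ‖((x ℓ, wseq ℓ) :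
      EuclideanSpace ℝ (Fin n) × (({i : Fin mE // i ∈ E} ⊕ {i : Fin mI // i ∈ A}) → ℝ))
      - (xs, ws)‖) ≤ 1 / 2 := by
    have htt : Tendsto (fun ℓ => S * (Kbig * ‖((x ℓ, wseq ℓ) :
        EuclideanSpace ℝ (Fin n) × (({i : Fin mE // i ∈ E} ⊕ {i : Fin mI // i ∈ A}) → ℝ))
        - (xs, ws)‖)) atTop (nhds (S * (Kbig * 0))) :=
      tendsto_const_nhds.mul (tendsto_const_nhds.mul hnorm0)
    rw [mul_zero, mul_zero] at htt
    exact htt.eventually_le_const (by norm_num)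
  filter_upwards [hev1, hev2, hC] with ℓ h1 h2 h3
  have hnewton := newton_step (Phi f c) (DPhi f c) (xs, ws) T hT r₀ Kbig hKbignn
    (fun z _ => hasFDerivAt_Phi f c hf hc z) hlip hPhi0
    (x ℓ, wseq ℓ) (d ℓ, wseq (ℓ + 1) - wseq ℓ)
    (mem_ball_iff_norm.mpr h1) h2 (hNewt ℓ)
  have hb1 : ‖x ℓ + d ℓ - xs‖ ≤ ‖((x ℓ, wseq ℓ) + (d ℓ, wseq (ℓ + 1) - wseq ℓ) - (xs, ws) :
      EuclideanSpace ℝ (Fin n) × (({i : Fin mE // i ∈ E} ⊕ {i : Fin mI // i ∈ A}) → ℝ))‖ :=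
    norm_fst_le ((x ℓ, wseq ℓ) + (d ℓ, wseq (ℓ + 1) - wseq ℓ) - ((xs, ws) :
      EuclideanSpace ℝ (Fin n) × (({i : Fin mE // i ∈ E} ⊕ {i : Fin mI // i ∈ A}) → ℝ)))
  have hb2 : ‖((x ℓ, wseq ℓ) - (xs, ws) :
      EuclideanSpace ℝ (Fin n) × (({i : Fin mE // i ∈ E} ⊕ {i : Fin mI // i ∈ A}) → ℝ))‖
      ≤ (1 + |C|) * ‖x ℓ - xs‖ := by
    have hxnn : (0:ℝ) ≤ ‖x ℓ - xs‖ := norm_nonneg _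
    have hCx : (0:ℝ) ≤ C * ‖x ℓ - xs‖ :=
      le_trans (add_nonneg (norm_nonneg _) (norm_nonneg _)) h3
    rw [Prod.norm_def]
    apply max_le
    · show ‖x ℓ - xs‖ ≤ (1 + |C|) * ‖x ℓ - xs‖
      nlinarith [abs_nonneg C]
    · show ‖wseq ℓ - ws‖ ≤ (1 + |C|) * ‖x ℓ - xs‖
      have hwBound : ‖wseq ℓ - ws‖ ≤ ‖μ ℓ - μstar‖ + ‖lam ℓ - lamstar‖ := by
        refine (pi_norm_le_iff_of_nonneg (add_nonneg (norm_nonneg _) (norm_nonneg _))).mpr ?_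
        rintro (i | i)
        · refine le_trans ?_ (le_add_of_nonneg_right (norm_nonneg _))
          exact le_trans (le_of_eq rfl) (by simpa [hwseqdef, hwsdef] using norm_le_pi_norm (μ ℓ - μstar) i.1)
        · refine le_trans ?_ (le_add_of_nonneg_left (norm_nonneg _))
          exact le_trans (le_of_eq rfl) (by simpa [hwseqdef, hwsdef] using norm_le_pi_norm (lam ℓ - lamstar) i.1)
      have h4 : C * ‖x ℓ - xs‖ ≤ |C| * ‖x ℓ - xs‖ :=
        mul_le_mul_of_nonneg_right (le_abs_self C) hxnn
      nlinarith [le_trans hwBound h3]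
  have hsq : ‖((x ℓ, wseq ℓ) - (xs, ws) :
      EuclideanSpace ℝ (Fin n) × (({i : Fin mE // i ∈ E} ⊕ {i : Fin mI // i ∈ A}) → ℝ))‖ ^ 2
      ≤ ((1 + |C|) * ‖x ℓ - xs‖) ^ 2 :=
    pow_le_pow_left₀ (norm_nonneg _) hb2 2
  calc ‖x ℓ + d ℓ - xs‖
      ≤ ‖((x ℓ, wseq ℓ) + (d ℓ, wseq (ℓ + 1) - wseq ℓ) - (xs, ws) :
        EuclideanSpace ℝ (Fin n) × (({i : Fin mE // i ∈ E} ⊕ {i : Fin mI // i ∈ A}) → ℝ))‖ := hb1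
    _ ≤ 4 * S * Kbig * ‖((x ℓ, wseq ℓ) - (xs, ws) :
        EuclideanSpace ℝ (Fin n) × (({i : Fin mE // i ∈ E} ⊕ {i : Fin mI // i ∈ A}) → ℝ))‖ ^ 2 :=
        hnewton
    _ ≤ 4 * S * Kbig * ((1 + |C|) * ‖x ℓ - xs‖) ^ 2 := by
        apply mul_le_mul_of_nonneg_left hsq
        positivity
    _ = 4 * S * Kbig * (1 + |C|) ^ 2 * ‖x ℓ - xs‖ ^ 2 := by ring
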